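/- Let n ≥ 4, k = 4, and define c_{1j} = ∑_{r=0}^{2} (−1)^{r+1} C(n−j, 2−r)·C(j−2, r) for 3 ≤ j ≤ n−1. Then ∑_{j=3}^{n−1} c_{1j} + C(n−1, 3) = 2·C(n−2, 2). -/
import Mathlib

open Finset

lemma g1 (n : ℕ) : ∑ i ∈ range n, (i+1) = (n+1).choose 2 := by
  induction n with
  | zero => simp
  | succ n ih =>
      rw [sum_range_succ, ih, Nat.choose_succ_succ (n+1) 1]
      simp [Nat.choose_one_right]; omega

lemma hkN (n : ℕ) : ∑ i ∈ range n, (i+1).choose 2 = (n+1).choose 3 := by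
  induction n with
  | zero => decide
  | succ n ih =>
      rw [sum_range_succ, ih, Nat.choose_succ_succ (n+1) 2]
      simp only [show Nat.succ 2 = 3 from rfl]
      omega

lemma s2 (m : ℕ) : ∑ i ∈ range (m+1), (m+1-i)*(i+1) = (m+3).choose 3 := by
  induction m with
  | zero => simp
  | succ m ih =>
      have h : ∀ i ∈ range (m+2), (m+2-i)*(i+1) = (m+1-i)*(i+1) + (i+1) := by
        intro i hi
        simp only [mem_range] at hi
        have : m+2-i = (m+1-i)+1 := by omega
        rw [this]; ring
      rw [sum_congr rfl h, sum_add_distrib, sum_range_succ, Nat.sub_self,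
        zero_mul, add_zero, ih, g1, Nat.choose_succ_succ (m+3) 2]
      simp only [show Nat.succ 2 = 3 from rfl, show m+2+1 = m+3 from rfl]
      omega

theorem coefficient_sum_k4 (n : ℕ) (hn : 4 ≤ n) :
    (∑ j ∈ Finset.Icc 3 (n - 1),
        ∑ r ∈ Finset.range 3, (-1 : ℤ) ^ (r + 1) *
          Nat.choose (n - j) (2 - r) * Nat.choose (j - 2) r) +
      (Nat.choose (n - 1) 3 : ℤ) = 2 * Nat.choose (n - 2) 2 := by
  obtain ⟨m, rfl⟩ := Nat.exists_eq_add_of_le hn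
  have h1 : Finset.Icc 3 (4 + m - 1) = Finset.Ico 3 (4 + m) := by
    rw [← Finset.Ico_add_one_right_eq_Icc]; congr 1; omega
  rw [h1, Finset.sum_Ico_eq_sum_range]
  have h2 : 4 + m - 3 = m + 1 := by omega
  rw [h2]
  have h3 : ∀ i ∈ range (m+1),
      (∑ r ∈ Finset.range 3, (-1 : ℤ) ^ (r + 1) *
          Nat.choose (4 + m - (3 + i)) (2 - r) * Nat.choose (3 + i - 2) r)
      = -(((m+1-i).choose 2 : ℕ) : ℤ) + (((m+1-i)*(i+1) : ℕ) : ℤ)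
          - (((i+1).choose 2 : ℕ) : ℤ) := by
    intro i hi
    simp only [mem_range] at hi
    have e : 4 + m - (3 + i) = m + 1 - i := by omega
    have h4 : 3 + i - 2 = i + 1 := by omega
    rw [e, h4, Finset.sum_range_succ, Finset.sum_range_succ, Finset.sum_range_one]
    simp [Nat.choose_one_right]
    push_cast
    ring
  rw [Finset.sum_congr rfl h3]
  have e1 : ∑ i ∈ range (m+1),
      (-(((m+1-i).choose 2 : ℕ) : ℤ) + (((m+1-i)*(i+1) : ℕ) : ℤ)
        - (((i+1).choose 2 : ℕ) : ℤ))
      = -(((∑ i ∈ range (m+1), (m+1-i).choose 2 : ℕ)) : ℤ)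
        + (((∑ i ∈ range (m+1), (m+1-i)*(i+1) : ℕ)) : ℤ)
        - (((∑ i ∈ range (m+1), (i+1).choose 2 : ℕ)) : ℤ) := by
    push_cast
    rw [sum_sub_distrib, sum_add_distrib, sum_neg_distrib]
  rw [e1]
  have e2 : ∑ i ∈ range (m+1), (m+1-i).choose 2
      = ∑ i ∈ range (m+1), (i+1).choose 2 := by
    rw [← sum_range_reflect]
    apply sum_congr rfl
    intro i hi
    simp only [mem_range] at hi
    congr 2
    omega
  rw [e2, hkN, s2]
  have h6 : 4 + m - 1 = m + 3 := by omega
  have h7 : 4 + m - 2 = m + 2 := by omega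
  rw [h6, h7]
  have : (m+3).choose 3 = (m+2).choose 2 + (m+2).choose 3 :=
    Nat.choose_succ_succ (m+2) 2
  push_cast [this]
  ring
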